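/- For every edge e of G, deleting e from G creates an induced path on 6 vertices. -/

import Mathlib

open SimpleGraph

/-- The set of nonzero cubes in a field. -/
def cubes (F : Type) [Field F] : Set F := {s | ∃ x : F, x ≠ 0 ∧ x ^ 3 = s}

/-- The Cayley graph on `F` with connection set the nonzero cubes:
`x ~ y` iff `x - y` is a nonzero cube. -/
def cayley (F : Type) [Field F] : SimpleGraph F :=
  SimpleGraph.fromRel (fun x y => x - y ∈ cubes F)

/-- `v : Fin n → V` is an induced path on `n` vertices in `G`. -/
def IsInducedPath {V : Type} (G : SimpleGraph V) {n : ℕ} (v : Fin n → V) : Prop :=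
  Function.Injective v ∧
    ∀ i j : Fin n, G.Adj (v i) (v j) ↔ (i.val + 1 = j.val ∨ j.val + 1 = i.val)

private lemma buildPath {V : Type} (G : SimpleGraph V) (e0 e1 e2 e3 e4 e5 : V)
    (d01 : e0 ≠ e1) (d02 : e0 ≠ e2) (d03 : e0 ≠ e3) (d04 : e0 ≠ e4) (d05 : e0 ≠ e5)
    (d12 : e1 ≠ e2) (d13 : e1 ≠ e3) (d14 : e1 ≠ e4) (d15 : e1 ≠ e5)
    (d23 : e2 ≠ e3) (d24 : e2 ≠ e4) (d25 : e2 ≠ e5)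
    (d34 : e3 ≠ e4) (d35 : e3 ≠ e5) (d45 : e4 ≠ e5)
    (a01 : G.Adj e0 e1) (a12 : G.Adj e1 e2) (a23 : G.Adj e2 e3)
    (a34 : G.Adj e3 e4) (a45 : G.Adj e4 e5)
    (n02 : ¬ G.Adj e0 e2) (n03 : ¬ G.Adj e0 e3) (n04 : ¬ G.Adj e0 e4) (n05 : ¬ G.Adj e0 e5)
    (n13 : ¬ G.Adj e1 e3) (n14 : ¬ G.Adj e1 e4) (n15 : ¬ G.Adj e1 e5)
    (n24 : ¬ G.Adj e2 e4) (n25 : ¬ G.Adj e2 e5) (n35 : ¬ G.Adj e3 e5) :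
    IsInducedPath G ![e0, e1, e2, e3, e4, e5] := by
  constructor
  · intro i j h
    fin_cases i <;> fin_cases j <;>
      first
        | rfl
        | exact absurd h (by assumption)
        | exact absurd h.symm (by assumption)
  · intro i j
    fin_cases i <;> fin_cases j <;>
      first
        | exact iff_of_false G.irrefl (by decide)
        | exact iff_of_true (by assumption) (by decide)
        | exact iff_of_true (SimpleGraph.Adj.symm (by assumption)) (by decide)
        | exact iff_of_false (by assumption) (by decide)
        | exact iff_of_false (fun hh => absurd hh.symm (by assumption)) (by decide)

theorem stmt15 (F : Type) [Field F] [Fintype F] (hF : Fintype.card F = 16)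
    (x y : F) (hxy : (cayley F).Adj x y) :
    ∃ v : Fin 6 → F, IsInducedPath ((cayley F).deleteEdges {s(x, y)}) v := by
  classical
  -- characteristic 2
  have h16 : ((16 : ℕ) : F) = 0 := by rw [← hF]; exact FiniteField.cast_card_eq_zero F
  have hchar : ringChar F = 2 := by
    have hp : (ringChar F).Prime := CharP.char_is_prime F (ringChar F)
    have hdvd : ringChar F ∣ 16 := ringChar.dvd h16
    have h24 : ringChar F ∣ 2 ^ 4 := by norm_num; exact hdvd
    exact (Nat.prime_dvd_prime_iff_eq hp Nat.prime_two).mp (hp.dvd_of_dvd_pow h24)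
  have h2 : (2 : F) = 0 := by
    have := CharP.cast_eq_zero F (ringChar F)
    rw [hchar] at this
    exact_mod_cast this
  -- a primitive fifth root of unity
  have hcardu : Fintype.card Fˣ = 15 := by rw [Fintype.card_units, hF]
  obtain ⟨g, hg⟩ := IsCyclic.exists_generator (α := Fˣ)
  have hord : orderOf g = 15 := by
    rw [orderOf_eq_card_of_forall_mem_zpowers hg, Nat.card_eq_fintype_card, hcardu]
  have hg3 : g ^ 3 ≠ 1 := by
    intro h
    have h' := orderOf_dvd_of_pow_eq_one h
    rw [hord] at h'
    norm_num at h'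
  set a : F := ((g ^ 3 : Fˣ) : F) with ha
  have ha5 : a ^ 5 = 1 := by
    have hg15 : (g ^ 3) ^ 5 = 1 := by
      rw [← pow_mul]
      have : g ^ 15 = 1 := by rw [← hord]; exact pow_orderOf_eq_one g
      simpa using this
    have : (((g ^ 3) ^ 5 : Fˣ) : F) = 1 := by rw [hg15]; rfl
    rw [ha, ← Units.val_pow_eq_pow_val]
    exact this
  have ha1 : a ≠ 1 := by
    intro h
    exact hg3 (Units.ext (by rw [Units.val_one]; exact h))
  have h5 : a ^ 4 + a ^ 3 + a ^ 2 + a + 1 = 0 := by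
    have hfac : (a - 1) * (a ^ 4 + a ^ 3 + a ^ 2 + a + 1) = 0 := by linear_combination ha5
    rcases mul_eq_zero.mp hfac with h | h
    · exact absurd (sub_eq_zero.mp h) ha1
    · exact h
  -- membership in cubes
  have hcube : ∀ u : F, u ∈ cubes F ↔ u ^ 5 = 1 := by
    intro u
    constructor
    · rintro ⟨t, ht0, rfl⟩
      have h15 : t ^ 15 = 1 := by
        have := FiniteField.pow_card_sub_one_eq_one t ht0
        rwa [hF] at this
      calc (t ^ 3) ^ 5 = t ^ 15 := by ring
        _ = 1 := h15
    · intro hu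
      have hu0 : u ≠ 0 := by
        intro h
        rw [h] at hu
        norm_num at hu
      exact ⟨u ^ 2, pow_ne_zero 2 hu0, by linear_combination u * hu⟩
  -- adjacency characterization
  have hAdj : ∀ u v : F, (cayley F).Adj u v ↔ (u - v) ^ 5 = 1 := by
    intro u v
    rw [cayley, SimpleGraph.fromRel_adj, hcube, hcube]
    constructor
    · rintro ⟨hne, h | h⟩
      · exact h
      · linear_combination (-1 : F) * h + (-1 : F) * h2
    · intro h
      have hne : u ≠ v := by
        intro he
        rw [he] at h
        norm_num at h
      exact ⟨hne, Or.inl h⟩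
  have hs : (x - y) ^ 5 = 1 := (hAdj x y).mp hxy
  set s : F := x - y with hsdef
  have hs0 : s ≠ 0 := by
    intro h
    rw [h] at hs
    norm_num at hs
  -- helpers
  have hEq : ∀ p q : F, s * p + y = s * q + y → p = q := by
    intro p q h
    have h' : s * p = s * q := by linear_combination h
    exact mul_left_cancel₀ hs0 h'
  have hne' : ∀ p q : F, p ≠ q → s * p + y ≠ s * q + y := fun p q h hc => h (hEq _ _ hc)
  have hA : ∀ p q : F, (p - q) ^ 5 = 1 → (cayley F).Adj (s * p + y) (s * q + y) := by
    intro p q h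
    rw [hAdj]
    linear_combination (p - q) ^ 5 * hs + h
  have hN' : ∀ p q : F, (p - q) ^ 5 ≠ 1 →
      ¬ ((cayley F).deleteEdges {s(x, y)}).Adj (s * p + y) (s * q + y) := by
    intro p q hc h
    apply hc
    have h' := (hAdj _ _).mp (SimpleGraph.deleteEdges_adj.mp h).1
    linear_combination h' - (p - q) ^ 5 * hs
  have hA' : ∀ p q : F, (p - q) ^ 5 = 1 → ¬(p = 1 ∧ q = 0) → ¬(p = 0 ∧ q = 1) →
      ((cayley F).deleteEdges {s(x, y)}).Adj (s * p + y) (s * q + y) := by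
    intro p q h h10 h01
    rw [SimpleGraph.deleteEdges_adj]
    refine ⟨hA p q h, ?_⟩
    intro hmem
    rw [Set.mem_singleton_iff, Sym2.eq_iff] at hmem
    rcases hmem with ⟨h1, hh2⟩ | ⟨h1, hh2⟩
    · exact h10 ⟨hEq p 1 (by rw [h1, hsdef]; ring), hEq q 0 (by rw [hh2]; ring)⟩
    · exact h01 ⟨hEq p 0 (by rw [h1]; ring), hEq q 1 (by rw [hh2, hsdef]; ring)⟩
  have hDel : ¬ ((cayley F).deleteEdges {s(x, y)}).Adj (s * (0:F) + y) (s * (1:F) + y) := by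
    rw [SimpleGraph.deleteEdges_adj]
    rintro ⟨-, hmem⟩
    apply hmem
    rw [Set.mem_singleton_iff, Sym2.eq_iff]
    right
    exact ⟨by ring, by rw [hsdef]; ring⟩
  refine ⟨![s * ((0:F)) + y, s * (a) + y, s * (a ^ 2 + a) + y, s * (a ^ 2 + a + 1) + y, s * (a ^ 2 + 1) + y, s * ((1:F)) + y], buildPath _ _ _ _ _ _ _
    (hne' _ _ (sub_ne_zero.mp (right_ne_zero_of_mul_eq_one (show (a ^ 3 + a ^ 2 + a + 1) * (((0:F)) - (a)) = 1 by linear_combination ((-1)) * h5 + (0) * h2))))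
    (hne' _ _ (sub_ne_zero.mp (right_ne_zero_of_mul_eq_one (show (a ^ 2 + 1) * (((0:F)) - (a ^ 2 + a)) = 1 by linear_combination ((-1)) * h5 + (0) * h2))))
    (hne' _ _ (sub_ne_zero.mp (right_ne_zero_of_mul_eq_one (show (a ^ 3 + 1) * (((0:F)) - (a ^ 2 + a + 1)) = 1 by linear_combination ((-1) * a) * h5 + ((-1)) * h2))))
    (hne' _ _ (sub_ne_zero.mp (right_ne_zero_of_mul_eq_one (show (a ^ 2 + a) * (((0:F)) - (a ^ 2 + 1)) = 1 by linear_combination ((-1)) * h5 + (0) * h2))))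
    (hne' _ _ (sub_ne_zero.mp (right_ne_zero_of_mul_eq_one (show (1) * (((0:F)) - ((1:F))) = 1 by linear_combination (0) * h5 + ((-1)) * h2))))
    (hne' _ _ (sub_ne_zero.mp (right_ne_zero_of_mul_eq_one (show (a ^ 3) * ((a) - (a ^ 2 + a)) = 1 by linear_combination ((-1) * a + 1) * h5 + ((-1)) * h2))))
    (hne' _ _ (sub_ne_zero.mp (right_ne_zero_of_mul_eq_one (show (a ^ 2 + a) * ((a) - (a ^ 2 + a + 1)) = 1 by linear_combination ((-1)) * h5 + (0) * h2))))
    (hne' _ _ (sub_ne_zero.mp (right_ne_zero_of_mul_eq_one (show (a ^ 3 + 1) * ((a) - (a ^ 2 + 1)) = 1 by linear_combination ((-1) * a + 2) * h5 + ((-1) * a ^ 3 + (-1) * a ^ 2 + (-2)) * h2))))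
    (hne' _ _ (sub_ne_zero.mp (right_ne_zero_of_mul_eq_one (show (a ^ 3 + a) * ((a) - ((1:F))) = 1 by linear_combination (1) * h5 + ((-1) * a ^ 3 + (-1) * a + (-1)) * h2))))
    (hne' _ _ (sub_ne_zero.mp (right_ne_zero_of_mul_eq_one (show (1) * ((a ^ 2 + a) - (a ^ 2 + a + 1)) = 1 by linear_combination (0) * h5 + ((-1)) * h2))))
    (hne' _ _ (sub_ne_zero.mp (right_ne_zero_of_mul_eq_one (show (a ^ 3 + a) * ((a ^ 2 + a) - (a ^ 2 + 1)) = 1 by linear_combination (1) * h5 + ((-1) * a ^ 3 + (-1) * a + (-1)) * h2))))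
    (hne' _ _ (sub_ne_zero.mp (right_ne_zero_of_mul_eq_one (show (a ^ 3 + 1) * ((a ^ 2 + a) - ((1:F))) = 1 by linear_combination (a) * h5 + ((-1) * a ^ 3 + (-1)) * h2))))
    (hne' _ _ (sub_ne_zero.mp (right_ne_zero_of_mul_eq_one (show (a ^ 3 + a ^ 2 + a + 1) * ((a ^ 2 + a + 1) - (a ^ 2 + 1)) = 1 by linear_combination (1) * h5 + ((-1)) * h2))))
    (hne' _ _ (sub_ne_zero.mp (right_ne_zero_of_mul_eq_one (show (a ^ 2 + 1) * ((a ^ 2 + a + 1) - ((1:F))) = 1 by linear_combination (1) * h5 + ((-1)) * h2))))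
    (hne' _ _ (sub_ne_zero.mp (right_ne_zero_of_mul_eq_one (show (a ^ 3) * ((a ^ 2 + 1) - ((1:F))) = 1 by linear_combination (a + (-1)) * h5 + (0) * h2))))
    (hA' _ _ (by linear_combination ((-1) * a + 1) * h5 + ((-1)) * h2) (fun h => (sub_ne_zero.mp (right_ne_zero_of_mul_eq_one (show (1) * (((0:F)) - 1) = 1 by linear_combination (0) * h5 + ((-1)) * h2))) h.1) (fun h => (sub_ne_zero.mp (right_ne_zero_of_mul_eq_one (show (a ^ 3 + a) * ((a) - 1) = 1 by linear_combination (1) * h5 + ((-1) * a ^ 3 + (-1) * a + (-1)) * h2))) h.2))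
    (hA' _ _ (by linear_combination ((-1) * a ^ 6 + a ^ 5 + (-1) * a + 1) * h5 + ((-1)) * h2) (fun h => (sub_ne_zero.mp (right_ne_zero_of_mul_eq_one (show (a ^ 3 + a) * ((a) - 1) = 1 by linear_combination (1) * h5 + ((-1) * a ^ 3 + (-1) * a + (-1)) * h2))) h.1) (fun h => (sub_ne_zero.mp (right_ne_zero_of_mul_eq_one (show (a ^ 3 + a ^ 2 + a + 1) * ((a) - 0) = 1 by linear_combination (1) * h5 + ((-1)) * h2))) h.1))
    (hA' _ _ (by linear_combination (0) * h5 + ((-1)) * h2) (fun h => (sub_ne_zero.mp (right_ne_zero_of_mul_eq_one (show (a ^ 3 + 1) * ((a ^ 2 + a) - 1) = 1 by linear_combination (a) * h5 + ((-1) * a ^ 3 + (-1)) * h2))) h.1) (fun h => (sub_ne_zero.mp (right_ne_zero_of_mul_eq_one (show (a ^ 2 + 1) * ((a ^ 2 + a) - 0) = 1 by linear_combination (1) * h5 + ((-1)) * h2))) h.1))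
    (hA' _ _ (by linear_combination (a + (-1)) * h5 + (0) * h2) (fun h => (sub_ne_zero.mp (right_ne_zero_of_mul_eq_one (show (a ^ 2 + 1) * ((a ^ 2 + a + 1) - 1) = 1 by linear_combination (1) * h5 + ((-1)) * h2))) h.1) (fun h => (sub_ne_zero.mp (right_ne_zero_of_mul_eq_one (show (a ^ 3 + 1) * ((a ^ 2 + a + 1) - 0) = 1 by linear_combination (a) * h5 + (0) * h2))) h.1))
    (hA' _ _ (by linear_combination (a ^ 6 + (-1) * a ^ 5 + a + (-1)) * h5 + (0) * h2) (fun h => (sub_ne_zero.mp (right_ne_zero_of_mul_eq_one (show (a ^ 3) * ((a ^ 2 + 1) - 1) = 1 by linear_combination (a + (-1)) * h5 + (0) * h2))) h.1) (fun h => (sub_ne_zero.mp (right_ne_zero_of_mul_eq_one (show (a ^ 2 + a) * ((a ^ 2 + 1) - 0) = 1 by linear_combination (1) * h5 + ((-1)) * h2))) h.1))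
    (hN' _ _ (sub_ne_zero.mp (right_ne_zero_of_mul_eq_one (show (a ^ 3 + a ^ 2 + 1) * ((((0:F)) - (a ^ 2 + a)) ^ 5 - 1) = 1 by linear_combination ((-1) * a ^ 9 + (-5) * a ^ 8 + (-9) * a ^ 7 + (-6) * a ^ 6 + a ^ 5 + 3 * a ^ 4 + (-3) * a ^ 2 + (-2) * a + 2) * h5 + (a ^ 3 + a ^ 2 + (-2)) * h2))))
    (hN' _ _ (sub_ne_zero.mp (right_ne_zero_of_mul_eq_one (show (a ^ 3 + a ^ 2 + 1) * ((((0:F)) - (a ^ 2 + a + 1)) ^ 5 - 1) = 1 by linear_combination ((-1) * a ^ 9 + (-5) * a ^ 8 + (-14) * a ^ 7 + (-26) * a ^ 6 + (-34) * a ^ 5 + (-32) * a ^ 4 + (-20) * a ^ 3 + (-8) * a ^ 2 + (-2) * a + (-3)) * h5 + ((-2) * a ^ 3 + (-2) * a ^ 2) * h2))))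
    (hN' _ _ (sub_ne_zero.mp (right_ne_zero_of_mul_eq_one (show (a ^ 3 + a ^ 2) * ((((0:F)) - (a ^ 2 + 1)) ^ 5 - 1) = 1 by linear_combination ((-1) * a ^ 9 + (-4) * a ^ 7 + (-5) * a ^ 5 + (-1) * a ^ 4 + (-4) * a ^ 2 + 5 * a + (-5)) * h5 + (a ^ 3 + a ^ 2 + 2) * h2))))
    (hDel)
    (hN' _ _ (sub_ne_zero.mp (right_ne_zero_of_mul_eq_one (show (a ^ 3 + a ^ 2) * (((a) - (a ^ 2 + a + 1)) ^ 5 - 1) = 1 by linear_combination ((-1) * a ^ 9 + (-4) * a ^ 7 + (-5) * a ^ 5 + (-1) * a ^ 4 + (-4) * a ^ 2 + 5 * a + (-5)) * h5 + (a ^ 3 + a ^ 2 + 2) * h2))))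
    (hN' _ _ (sub_ne_zero.mp (right_ne_zero_of_mul_eq_one (show (a ^ 3 + a ^ 2 + 1) * (((a) - (a ^ 2 + 1)) ^ 5 - 1) = 1 by linear_combination ((-1) * a ^ 9 + 5 * a ^ 8 + (-14) * a ^ 7 + 24 * a ^ 6 + (-24) * a ^ 5 + 50 * a ^ 3 + (-110) * a ^ 2 + 150 * a + (-145)) * h5 + (44 * a ^ 3 + 44 * a ^ 2 + 71) * h2))))
    (hN' _ _ (sub_ne_zero.mp (right_ne_zero_of_mul_eq_one (show (a ^ 3 + a ^ 2 + 1) * (((a) - ((1:F))) ^ 5 - 1) = 1 by linear_combination (a ^ 4 + (-5) * a ^ 3 + 9 * a ^ 2 + (-4) * a + (-11)) * h5 + (12 * a ^ 3 + (-3) * a ^ 2 + 10 * a + 4) * h2))))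
    (hN' _ _ (sub_ne_zero.mp (right_ne_zero_of_mul_eq_one (show (a ^ 3 + a ^ 2 + 1) * (((a ^ 2 + a) - (a ^ 2 + 1)) ^ 5 - 1) = 1 by linear_combination (a ^ 4 + (-5) * a ^ 3 + 9 * a ^ 2 + (-4) * a + (-11)) * h5 + (12 * a ^ 3 + (-3) * a ^ 2 + 10 * a + 4) * h2))))
    (hN' _ _ (sub_ne_zero.mp (right_ne_zero_of_mul_eq_one (show (a ^ 3 + a ^ 2 + 1) * (((a ^ 2 + a) - ((1:F))) ^ 5 - 1) = 1 by linear_combination (a ^ 9 + 5 * a ^ 8 + 4 * a ^ 7 + (-14) * a ^ 6 + (-16) * a ^ 5 + 22 * a ^ 4 + 20 * a ^ 3 + (-22) * a ^ 2 + (-8) * a + 3) * h5 + (10 * a ^ 2 + 5 * a + (-3)) * h2))))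
    (hN' _ _ (sub_ne_zero.mp (right_ne_zero_of_mul_eq_one (show (a ^ 3 + a ^ 2 + 1) * (((a ^ 2 + a + 1) - ((1:F))) ^ 5 - 1) = 1 by linear_combination (a ^ 9 + 5 * a ^ 8 + 9 * a ^ 7 + 6 * a ^ 6 + (-1) * a ^ 5 + (-3) * a ^ 4 + 3 * a ^ 2 + 2 * a + (-2)) * h5 + ((-2) * a ^ 3 + (-2) * a ^ 2) * h2))))⟩
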